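/- Let π : X → Y be a continuous surjection between compact metric spaces, K a nonempty closed subset of X, and α a finite open cover of X. Then D(α|_K | π) = min over finite open covers β of K such that {(π|_K)⁻¹(y)}_{y ∈ π(K)} ∨ β refines α|_K of ord(β|_K), where D(α|_K | π) is defined as the minimum of ord(β|_K) over finite open covers β of X with {π⁻¹(y)}_{y∈Y} ∨ β refining α. -/

import Mathlib

open Set Filter Topology
open scoped Classical BigOperators

/-- A finite open cover of a topological space. -/
def IsFinOpenCover {X : Type*} [TopologicalSpace X] (α : Finset (Set X)) : Prop :=
  (∀ U ∈ α, IsOpen U) ∧ ∀ x : X, ∃ U ∈ α, x ∈ U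

/-- `β` refines `α`: every member of `β` is contained in a member of `α`. -/
def Refines {X : Type*} (β α : Finset (Set X)) : Prop :=
  ∀ V ∈ β, ∃ U ∈ α, V ⊆ U

/-- The order of the cover `β` restricted to a subset `K`:
the maximal number of members of `β` containing a common point of `K`, minus one. -/
noncomputable def ordOn {X : Type*} (β : Finset (Set X)) (K : Set X) : ℤ :=
  sSup ((fun x => ((β.filter (fun U => x ∈ U)).card : ℤ)) '' K) - 1

/-- The join `{π⁻¹(y)}_{y ∈ Y} ∨ β` refines `α`. -/
def FiberJoinRefines {X Y : Type*} (π : X → Y) (β α : Finset (Set X)) : Prop :=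
  ∀ V ∈ β, ∀ y : Y, ∃ U ∈ α, π ⁻¹' {y} ∩ V ⊆ U

/-- `D(α|_K | π)`: minimum of `ordOn β K` over finite open covers `β` of `X` with
`{π⁻¹(y)} ∨ β` refining `α`. -/
noncomputable def DcondOn {X Y : Type*} [TopologicalSpace X] (π : X → Y)
    (α : Finset (Set X)) (K : Set X) : ℤ :=
  sInf { n : ℤ | ∃ β : Finset (Set X), IsFinOpenCover β ∧ FiberJoinRefines π β α ∧
    ordOn β K = n }

/-- `D(α|π)`. -/
noncomputable def Dcond {X Y : Type*} [TopologicalSpace X] (π : X → Y)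
    (α : Finset (Set X)) : ℤ :=
  DcondOn π α Set.univ

/-- `D(α)`: minimum of `ord β` over finite open covers `β` refining `α`. -/
noncomputable def Dabs {X : Type*} [TopologicalSpace X] (α : Finset (Set X)) : ℤ :=
  sInf { n : ℤ | ∃ β : Finset (Set X), IsFinOpenCover β ∧ Refines β α ∧
    ordOn β Set.univ = n }

/-- Covering dimension of a space: supremum of `D(α)` over finite open covers. -/
noncomputable def covDim (P : Type*) [TopologicalSpace P] : ℤ :=
  sSup { n : ℤ | ∃ α : Finset (Set P), IsFinOpenCover α ∧ Dabs α = n }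

/-- The join `α ∨ β = {U ∩ V : U ∈ α, V ∈ β}`. -/
noncomputable def joinCover {X : Type*} (α β : Finset (Set X)) : Finset (Set X) :=
  (α ×ˢ β).image (fun p => p.1 ∩ p.2)

/-- The product cover `αᵈ` of `X^d`. -/
noncomputable def piCover {X : Type*} (α : Finset (Set X)) (d : ℕ) :
    Finset (Set (Fin d → X)) :=
  (Fintype.piFinset (fun _ : Fin d => α)).image (fun U => Set.univ.pi U)

/-- A sofic approximation sequence for a group `G`. -/
structure SoficApprox (G : Type*) [Group G] where
  d : ℕ → ℕ
  σ : ∀ i, G → Equiv.Perm (Fin (d i))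
  mul_cond : ∀ s t : G,
    Tendsto (fun i => (((Finset.univ : Finset (Fin (d i))).filter
      (fun v => σ i s (σ i t v) = σ i (s * t) v)).card : ℝ) / (d i)) atTop (nhds 1)
  free_cond : ∀ s t : G, s ≠ t →
    Tendsto (fun i => (((Finset.univ : Finset (Fin (d i))).filter
      (fun v => σ i s v = σ i t v)).card : ℝ) / (d i)) atTop (nhds 0)
  d_lim : Tendsto d atTop atTop

/-- `Map(ρ, F, δ, σ)`: the set of maps `ξ : [d] → X` with
`ρ₂(ξ ∘ σ_s, s ∘ ξ) ≤ δ` for all `s ∈ F`. -/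
noncomputable def MapApprox {G X : Type*} [Group G] [MulAction G X]
    (ρ : X → X → ℝ) (F : Finset G) (δ : ℝ) {d : ℕ}
    (σ : G → Equiv.Perm (Fin d)) : Set (Fin d → X) :=
  { ξ | ∀ s ∈ F, Real.sqrt (∑ a : Fin d, (ρ (ξ (σ s a)) (s • ξ a)) ^ 2) ≤ δ }

/-- `D(α|π, ρ, F, δ, σ) = D(αᵈ|_{Map(ρ,F,δ,σ)} | πᵈ)`. -/
noncomputable def DvalCond {G X Y : Type*} [Group G] [MetricSpace X] [MulAction G X]
    (π : X → Y) (α : Finset (Set X)) (F : Finset G) (δ : ℝ) {d : ℕ}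
    (σ : G → Equiv.Perm (Fin d)) : ℤ :=
  sInf { n : ℤ | ∃ β : Finset (Set (Fin d → X)), IsFinOpenCover β ∧
    FiberJoinRefines (fun ξ => π ∘ ξ) β (piCover α d) ∧
    ordOn β (MapApprox dist F δ σ) = n }

/-- Sofic conditional mean dimension of a finite open cover `α` relative to `π`. -/
noncomputable def mdimCond {G X Y : Type*} [Group G] [MetricSpace X] [MulAction G X]
    (sa : SoficApprox G) (π : X → Y) (α : Finset (Set X)) : ℝ :=
  ⨅ F : Finset G, ⨅ δ : ℝ, ⨅ _ : 0 < δ,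
    limsup (fun i => (DvalCond π α F δ (sa.σ i) : ℝ) / (sa.d i)) atTop

/-- Sofic conditional mean dimension `mdim_Σ(X|π)`. -/
noncomputable def mdimCondSys {G X Y : Type*} [Group G] [MetricSpace X] [MulAction G X]
    (sa : SoficApprox G) (π : X → Y) : ℝ :=
  sSup { r : ℝ | ∃ α : Finset (Set X), IsFinOpenCover α ∧ mdimCond sa π α = r }

/-- Absolute version: `D(αᵈ|_{Map(ρ,F,δ,σ)})`. -/
noncomputable def DvalAbs {G X : Type*} [Group G] [MetricSpace X] [MulAction G X]
    (α : Finset (Set X)) (F : Finset G) (δ : ℝ) {d : ℕ}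
    (σ : G → Equiv.Perm (Fin d)) : ℤ :=
  sInf { n : ℤ | ∃ β : Finset (Set (Fin d → X)), IsFinOpenCover β ∧
    Refines β (piCover α d) ∧ ordOn β (MapApprox dist F δ σ) = n }

/-- Absolute sofic mean dimension of a finite open cover. -/
noncomputable def mdimAbs {G X : Type*} [Group G] [MetricSpace X] [MulAction G X]
    (sa : SoficApprox G) (α : Finset (Set X)) : ℝ :=
  ⨅ F : Finset G, ⨅ δ : ℝ, ⨅ _ : 0 < δ,
    limsup (fun i => (DvalAbs (G := G) α F δ (sa.σ i) : ℝ) / (sa.d i)) atTop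

/-- Relative version: `D(π, α, ρ, F, δ, σ) = D(αᵈ|_{πᵈ(Map(ρ,F,δ,σ))})`. -/
noncomputable def DvalRel {G X Y : Type*} [Group G] [MetricSpace X] [MulAction G X]
    [TopologicalSpace Y] (π : X → Y) (α : Finset (Set Y)) (F : Finset G) (δ : ℝ)
    {d : ℕ} (σ : G → Equiv.Perm (Fin d)) : ℤ :=
  sInf { n : ℤ | ∃ β : Finset (Set (Fin d → Y)), IsFinOpenCover β ∧
    Refines β (piCover α d) ∧
    ordOn β ((fun ξ => π ∘ ξ) '' MapApprox dist F δ σ) = n }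

/-- Relative sofic mean dimension `mdim_Σ(π, α)` of a finite open cover `α` of `Y`. -/
noncomputable def mdimRel {G X Y : Type*} [Group G] [MetricSpace X] [MulAction G X]
    [TopologicalSpace Y] (sa : SoficApprox G) (π : X → Y) (α : Finset (Set Y)) : ℝ :=
  ⨅ F : Finset G, ⨅ δ : ℝ, ⨅ _ : 0 < δ,
    limsup (fun i => (DvalRel π α F δ (sa.σ i) : ℝ) / (sa.d i)) atTop

/-- `α` is admissible with respect to the tuple `x`: no member of `α`
has closure containing all the points of `x`. -/
def AdmissibleCover {X : Type*} [TopologicalSpace X] (α : Finset (Set X))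
    {n : ℕ} (x : Fin n → X) : Prop :=
  ∀ U ∈ α, ¬ (Set.range x ⊆ closure U)

/-- The set `D_n^md(X|π, G, Σ)` of sofic conditional mean dimension `n`-tuples. -/
def condMDTuples {G X Y : Type*} [Group G] [MetricSpace X] [MulAction G X]
    (sa : SoficApprox G) (π : X → Y) (n : ℕ) : Set (Fin n → X) :=
  { x | (∃ i j, x i ≠ x j) ∧
    ∀ α : Finset (Set X), IsFinOpenCover α → AdmissibleCover α x →
      0 < mdimCond sa π α }

/-- The set `D_n^md(Y|X, G, Σ)` of relative sofic mean dimension `n`-tuples. -/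
def relMDTuples {G X Y : Type*} [Group G] [MetricSpace X] [MulAction G X]
    [TopologicalSpace Y] (sa : SoficApprox G) (π : X → Y) (n : ℕ) :
    Set (Fin n → Y) :=
  { y | (∃ i j, y i ≠ y j) ∧
    ∀ α : Finset (Set Y), IsFinOpenCover α → AdmissibleCover α y →
      0 < mdimRel sa π α }

/-- The index `(j,l) ↦ j·n + l : Fin (n·d)`. -/
def idx {d n : ℕ} (j : Fin d) (l : Fin n) : Fin (n * d) :=
  ⟨j.1 * n + l.1, by
    rcases j with ⟨j, hj⟩; rcases l with ⟨l, hl⟩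
    have h1 : j * n + l < (j + 1) * n := by nlinarith
    have h2 : (j + 1) * n ≤ d * n := Nat.mul_le_mul_right _ hj
    calc j * n + l < (j + 1) * n := h1
      _ ≤ d * n := h2
      _ = n * d := Nat.mul_comm d n⟩
private lemma tube_lemma' {X Y : Type*} [TopologicalSpace X] [TopologicalSpace Y] [T2Space Y]
    (π : X → Y) (hπ : Continuous π) {F : Set X} (hF : IsCompact F)
    {U : Set X} (hU : IsOpen U) {y : Y} (h : π ⁻¹' {y} ∩ F ⊆ U) :
    ∃ O : Set Y, IsOpen O ∧ y ∈ O ∧ π ⁻¹' O ∩ F ⊆ U := by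
  refine ⟨(π '' (F \ U))ᶜ, (((hF.diff hU).image hπ).isClosed).isOpen_compl, ?_, ?_⟩
  · intro hy
    obtain ⟨x, ⟨hxF, hxU⟩, hπx⟩ := hy
    exact hxU (h ⟨by simp [hπx], hxF⟩)
  · rintro x ⟨hxO, hxF⟩
    by_contra hxU
    exact hxO ⟨x, ⟨hxF, hxU⟩, rfl⟩

private lemma buildW {X Y : Type*} [TopologicalSpace X] [TopologicalSpace Y]
    [CompactSpace Y] [T2Space Y] [NormalSpace Y]
    (π : X → Y) (hπ : Continuous π) (α : Finset (Set X)) (hαo : ∀ U ∈ α, IsOpen U)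
    {F : Set X} (hF : IsCompact F)
    (h : ∀ y : Y, ∃ U ∈ α, π ⁻¹' {y} ∩ F ⊆ U) :
    ∃ W : Set X, IsOpen W ∧ F ⊆ W ∧ ∀ y : Y, ∃ U ∈ α, π ⁻¹' {y} ∩ W ⊆ U := by
  choose Uf hUmem hUsub using h
  have h2 : ∀ y : Y, ∃ O : Set Y, IsOpen O ∧ y ∈ O ∧ π ⁻¹' O ∩ F ⊆ Uf y :=
    fun y => tube_lemma' π hπ hF (hαo _ (hUmem y)) (hUsub y)
  choose O hOo hOy hOsub using h2
  obtain ⟨t, ht⟩ := isCompact_univ.elim_finite_subcover O hOo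
    (fun y _ => mem_iUnion.2 ⟨y, hOy y⟩)
  have hcov : (univ : Set Y) ⊆ ⋃ j : ↥t, O j := by
    intro y hy
    obtain ⟨j, hjt, hj⟩ := mem_iUnion₂.1 (ht hy)
    exact mem_iUnion.2 ⟨⟨j, hjt⟩, hj⟩
  obtain ⟨C, hCcov, hCcl, hCsub⟩ := exists_subset_iUnion_closed_subset isClosed_univ
    (fun j : ↥t => hOo j) (fun x _ => Set.toFinite _) hcov
  refine ⟨⋂ j : ↥t, ((π ⁻¹' (C j))ᶜ ∪ (π ⁻¹' (O j) ∩ Uf j)), ?_, ?_, ?_⟩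
  · refine isOpen_iInter_of_finite fun j => ?_
    exact ((hCcl j).preimage hπ).isOpen_compl.union
      (((hOo j).preimage hπ).inter (hαo _ (hUmem j)))
  · intro x hx
    refine mem_iInter.2 fun j => ?_
    by_cases hc : π x ∈ C j
    · exact Or.inr ⟨hCsub j hc, hOsub _ ⟨hCsub j hc, hx⟩⟩
    · exact Or.inl hc
  · intro y
    obtain ⟨j, hj⟩ := mem_iUnion.1 (hCcov (mem_univ y))
    refine ⟨Uf j, hUmem j, ?_⟩
    rintro x ⟨hxy, hxW⟩
    have hxy' : π x = y := hxy
    rcases mem_iInter.1 hxW j with h1 | h2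
    · exact absurd (show π x ∈ C j from hxy'.symm ▸ hj) h1
    · exact h2.2

private lemma sSup_sub_le' {A B : Set ℤ} (hA : A.Nonempty) (hB : BddAbove B)
    (h : ∀ a ∈ A, ∃ b ∈ B, a ≤ b) : sSup A - 1 ≤ sSup B - 1 := by
  refine sub_le_sub_right (csSup_le hA fun a ha => ?_) 1
  obtain ⟨b, hb, hab⟩ := h a ha
  exact hab.trans (le_csSup hB hb)

private lemma bddAbove_cardimg {X : Type*} (β : Finset (Set X)) (K : Set X) :
    BddAbove ((fun x => ((β.filter (fun U => x ∈ U)).card : ℤ)) '' K) :=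
  ⟨β.card, by
    rintro _ ⟨z, _, rfl⟩
    simp only []
    exact_mod_cast Finset.card_filter_le β (fun U => z ∈ U)⟩

private lemma ordOn_nonneg' {X : Type*} (β : Finset (Set X)) {K : Set X}
    (hK : K.Nonempty) (hcov : ∀ x ∈ K, ∃ U ∈ β, x ∈ U) : 0 ≤ ordOn β K := by
  obtain ⟨x, hx⟩ := hK
  obtain ⟨U, hU, hxU⟩ := hcov x hx
  have h1 : (1 : ℤ) ≤ ((β.filter (fun V => x ∈ V)).card : ℤ) := by
    exact_mod_cast Finset.card_pos.2 ⟨U, Finset.mem_filter.2 ⟨hU, hxU⟩⟩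
  have h2 : (1 : ℤ) ≤ sSup ((fun x => ((β.filter (fun U => x ∈ U)).card : ℤ)) '' K) :=
    h1.trans (le_csSup (bddAbove_cardimg β K) ⟨x, hx, rfl⟩)
  unfold ordOn; omega

private lemma card_filter_image_le {γ δ : Type*} (β : Finset γ)
    (f : γ → δ) (p : δ → Prop) :
    ((β.image f).filter p).card ≤ (β.filter (fun U => p (f U))).card := by
  classical
  calc ((β.image f).filter p).card
      ≤ ((β.filter (fun U => p (f U))).image f).card := Finset.card_le_card ?_
    _ ≤ (β.filter (fun U => p (f U))).card := Finset.card_image_le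
  intro S hS
  rw [Finset.mem_filter] at hS
  obtain ⟨U, hU, rfl⟩ := Finset.mem_image.1 hS.1
  exact Finset.mem_image.2 ⟨U, Finset.mem_filter.2 ⟨hU, hS.2⟩, rfl⟩

/-- For a nonempty closed `K ⊆ X`,
`D(α|_K | π)` equals the minimum of `ord(β)` over finite open covers `β` of `K`
whose join with the fibers of `π|_K` refines `α|_K`. -/
theorem stmt_6 {X Y : Type*} [MetricSpace X] [CompactSpace X]
    [MetricSpace Y] [CompactSpace Y]
    (π : X → Y) (hπc : Continuous π) (hπs : Function.Surjective π)
    (K : Set X) (hKne : K.Nonempty) (hKcl : IsClosed K)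
    (α : Finset (Set X)) (hα : IsFinOpenCover α) :
    DcondOn π α K =
      sInf { n : ℤ | ∃ β : Finset (Set K), IsFinOpenCover β ∧
        (∀ V ∈ β, ∀ y ∈ π '' K, ∃ U ∈ α,
          ((fun x : K => π x) ⁻¹' {y}) ∩ V ⊆ (Subtype.val ⁻¹' U)) ∧
        ordOn β Set.univ = n } := by
  classical
  obtain ⟨x₀, hx₀K⟩ := hKne
  have hKne' : K.Nonempty := ⟨x₀, hx₀K⟩
  obtain ⟨U₀, hU₀α, hx₀U₀⟩ := hα.2 x₀
  unfold DcondOn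
  set S1 : Set ℤ := { n : ℤ | ∃ β : Finset (Set X), IsFinOpenCover β ∧
    FiberJoinRefines π β α ∧ ordOn β K = n } with hS1
  set S2 : Set ℤ := { n : ℤ | ∃ β : Finset (Set K), IsFinOpenCover β ∧
    (∀ V ∈ β, ∀ y ∈ π '' K, ∃ U ∈ α,
      ((fun x : K => π x) ⁻¹' {y}) ∩ V ⊆ (Subtype.val ⁻¹' U)) ∧
    ordOn β Set.univ = n } with hS2
  have hbdd1 : BddBelow S1 := by
    refine ⟨0, ?_⟩
    rintro n ⟨β, hβ, -, rfl⟩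
    exact ordOn_nonneg' β hKne' (fun x _ => hβ.2 x)
  have hbdd2 : BddBelow S2 := by
    refine ⟨0, ?_⟩
    rintro n ⟨β, hβ, -, rfl⟩
    haveI : Nonempty K := ⟨⟨x₀, hx₀K⟩⟩
    exact ordOn_nonneg' β (Set.univ_nonempty (α := K)) (fun x _ => hβ.2 x)
  have step1 : ∀ n ∈ S1, ∃ m ∈ S2, m ≤ n := by
    rintro n ⟨β, hβ, href, rfl⟩
    set βim : Finset (Set K) := β.image (fun U => (Subtype.val : K → X) ⁻¹' U) with hβim
    refine ⟨ordOn βim Set.univ, ?_, ?_⟩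
    case _ =>
      simp only [hS2, Set.mem_setOf_eq]
      refine ⟨βim, ⟨?_, ?_⟩, ?_, rfl⟩
      · intro V hV
        obtain ⟨U, hU, rfl⟩ := Finset.mem_image.1 hV
        exact (hβ.1 U hU).preimage continuous_subtype_val
      · intro x
        obtain ⟨U, hU, hxU⟩ := hβ.2 (x : X)
        exact ⟨_, Finset.mem_image.2 ⟨U, hU, rfl⟩, hxU⟩
      · intro V hV y hy
        obtain ⟨U, hU, rfl⟩ := Finset.mem_image.1 hV
        obtain ⟨U', hU', hsub⟩ := href U hU y
        refine ⟨U', hU', ?_⟩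
        rintro z ⟨hzy, hzU⟩
        exact hsub ⟨hzy, hzU⟩
    · unfold ordOn
      apply sSup_sub_le'
      · exact ⟨_, ⟨(⟨x₀, hx₀K⟩ : K), Set.mem_univ _, rfl⟩⟩
      · exact bddAbove_cardimg β K
      rintro a ⟨x, -, rfl⟩
      refine ⟨_, ⟨(x : X), x.2, rfl⟩, ?_⟩
      show ((βim.filter (fun U => x ∈ U)).card : ℤ)
        ≤ ((β.filter (fun U => (x : X) ∈ U)).card : ℤ)
      have h1 := card_filter_image_le β (fun U => (Subtype.val : K → X) ⁻¹' U)
        (fun V => x ∈ V)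
      have h2 : β.filter (fun U => x ∈ (Subtype.val : K → X) ⁻¹' U)
          = β.filter (fun U => (x : X) ∈ U) :=
        Finset.filter_congr (fun U _ => Iff.rfl)
      rw [h2] at h1
      exact_mod_cast h1
  have step2 : ∀ n ∈ S2, ∃ m ∈ S1, m ≤ n := by
    rintro n ⟨β', hβ', hcond, rfl⟩
    have hVt : ∀ V : {V // V ∈ β'}, ∃ T : Set X, IsOpen T ∧ Subtype.val ⁻¹' T = V.1 :=
      fun V => isOpen_induced_iff.1 (hβ'.1 V.1 V.2)
    choose Vt hVtO hVtP using hVt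
    have hKsub : K ⊆ ⋃ V : {V // V ∈ β'}, Vt V := by
      intro x hx
      obtain ⟨V, hV, hxV⟩ := hβ'.2 ⟨x, hx⟩
      have hxV' : (⟨x, hx⟩ : K) ∈ Subtype.val ⁻¹' Vt ⟨V, hV⟩ := by
        rw [hVtP ⟨V, hV⟩]; exact hxV
      exact Set.mem_iUnion.2 ⟨⟨V, hV⟩, hxV'⟩
    obtain ⟨G, hGcov, hGcl, hGsub⟩ := exists_subset_iUnion_closed_subset hKcl hVtO
      (fun x _ => Set.toFinite _) hKsub
    have hFK : ∀ V : {V // V ∈ β'}, G V ∩ K ⊆ K := fun V => Set.inter_subset_right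
    have hFsub : ∀ V : {V // V ∈ β'}, G V ∩ K ⊆ Vt V :=
      fun V => Set.inter_subset_left.trans (hGsub V)
    have hFfib : ∀ V : {V // V ∈ β'}, ∀ y : Y, ∃ U ∈ α, π ⁻¹' {y} ∩ (G V ∩ K) ⊆ U := by
      intro V y
      by_cases hy : y ∈ π '' K
      · obtain ⟨U, hU, hsub⟩ := hcond V.1 V.2 y hy
        refine ⟨U, hU, ?_⟩
        rintro x ⟨hxy, hxF⟩
        have hxK : x ∈ K := hFK V hxF
        have hxV : (⟨x, hxK⟩ : K) ∈ V.1 := by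
          have hmem : (⟨x, hxK⟩ : K) ∈ Subtype.val ⁻¹' Vt V := hFsub V hxF
          rwa [hVtP V] at hmem
        exact hsub ⟨hxy, hxV⟩
      · refine ⟨U₀, hU₀α, ?_⟩
        rintro x ⟨hxy, hxF⟩
        exact absurd ⟨x, hFK V hxF, hxy⟩ hy
    have hW : ∀ V : {V // V ∈ β'}, ∃ W : Set X, IsOpen W ∧ G V ∩ K ⊆ W ∧
        (∀ y : Y, ∃ U ∈ α, π ⁻¹' {y} ∩ W ⊆ U) ∧ W ⊆ Vt V := by
      intro V
      obtain ⟨W₀, hW₀o, hFW₀, hW₀fib⟩ := buildW π hπc α hα.1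
        (((hGcl V).inter hKcl).isCompact) (hFfib V)
      refine ⟨W₀ ∩ Vt V, hW₀o.inter (hVtO V),
        Set.subset_inter hFW₀ (hFsub V), ?_, Set.inter_subset_right⟩
      intro y
      obtain ⟨U, hU, hsub⟩ := hW₀fib y
      exact ⟨U, hU, fun x hx => hsub ⟨hx.1, hx.2.1⟩⟩
    choose W hWo hFW hWfib hWVt using hW
    set β : Finset (Set X) :=
      (Finset.univ : Finset {V // V ∈ β'}).image W ∪ α.image (fun U => U \ K) with hβdef
    have hβcov : IsFinOpenCover β := by
      constructor
      · intro S hS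
        rcases Finset.mem_union.1 hS with h | h
        · obtain ⟨V, -, rfl⟩ := Finset.mem_image.1 h
          exact hWo V
        · obtain ⟨U, hU, rfl⟩ := Finset.mem_image.1 h
          exact (hα.1 U hU).sdiff hKcl
      · intro x
        by_cases hx : x ∈ K
        · obtain ⟨V, hV⟩ := Set.mem_iUnion.1 (hGcov hx)
          exact ⟨W V, Finset.mem_union_left _
            (Finset.mem_image.2 ⟨V, Finset.mem_univ V, rfl⟩), hFW V ⟨hV, hx⟩⟩
        · obtain ⟨U, hU, hxU⟩ := hα.2 x
          exact ⟨U \ K, Finset.mem_union_right _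
            (Finset.mem_image.2 ⟨U, hU, rfl⟩), hxU, hx⟩
    have hβfib : FiberJoinRefines π β α := by
      intro S hS y
      rcases Finset.mem_union.1 hS with h | h
      · obtain ⟨V, -, rfl⟩ := Finset.mem_image.1 h
        exact hWfib V y
      · obtain ⟨U, hU, rfl⟩ := Finset.mem_image.1 h
        exact ⟨U, hU, fun x hx => hx.2.1⟩
    have hmem : ordOn β K ∈ S1 := by
      simp only [hS1, Set.mem_setOf_eq]
      exact ⟨β, hβcov, hβfib, rfl⟩
    refine ⟨ordOn β K, hmem, ?_⟩
    unfold ordOn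
    apply sSup_sub_le'
    · exact ⟨_, ⟨x₀, hx₀K, rfl⟩⟩
    · exact bddAbove_cardimg β' Set.univ
    rintro a ⟨x, hxK, rfl⟩
    refine ⟨_, ⟨(⟨x, hxK⟩ : K), Set.mem_univ _, rfl⟩, ?_⟩
    have e1 : (α.image (fun U => U \ K)).filter (fun S => x ∈ S) = ∅ := by
      refine Finset.filter_eq_empty_iff.2 ?_
      intro S hS
      obtain ⟨U, -, rfl⟩ := Finset.mem_image.1 hS
      exact fun hxS => hxS.2 hxK
    have e2 : (β.filter (fun S => x ∈ S)).card
        = (((Finset.univ : Finset {V // V ∈ β'}).image W).filter (fun S => x ∈ S)).card := by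
      rw [hβdef, Finset.filter_union, e1, Finset.union_empty]
    have e3 := card_filter_image_le (Finset.univ : Finset {V // V ∈ β'}) W (fun S => x ∈ S)
    have e4 : ((Finset.univ : Finset {V // V ∈ β'}).filter (fun V => x ∈ W V)).card
        ≤ (β'.filter (fun V => (⟨x, hxK⟩ : K) ∈ V)).card := by
      refine Finset.card_le_card_of_injOn (fun V => V.1) ?_ ?_
      · intro V hV
        rw [Finset.mem_coe, Finset.mem_filter] at hV ⊢
        refine ⟨V.2, ?_⟩
        have hmem : (⟨x, hxK⟩ : K) ∈ Subtype.val ⁻¹' Vt V := hWVt V hV.2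
        rwa [hVtP V] at hmem
      · exact fun a _ b _ h => Subtype.ext h
    have h5 : (β.filter (fun S => x ∈ S)).card
        ≤ (β'.filter (fun V => (⟨x, hxK⟩ : K) ∈ V)).card := by
      rw [e2]; exact e3.trans e4
    show ((β.filter (fun U => x ∈ U)).card : ℤ)
      ≤ ((β'.filter (fun U => (⟨x, hxK⟩ : K) ∈ U)).card : ℤ)
    exact_mod_cast h5
  have hS1ne : S1.Nonempty := by
    refine ⟨ordOn α K, ?_⟩
    simp only [hS1, Set.mem_setOf_eq]
    refine ⟨α, hα, ?_, rfl⟩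
    intro V hV y
    exact ⟨V, hV, Set.inter_subset_right⟩
  have hS2ne : S2.Nonempty := by
    obtain ⟨m, hm, -⟩ := step1 _ hS1ne.choose_spec
    exact ⟨m, hm⟩
  refine le_antisymm (le_csInf hS2ne ?_) (le_csInf hS1ne ?_)
  · intro n hn
    obtain ⟨m, hm, hmn⟩ := step2 n hn
    exact (csInf_le hbdd1 hm).trans hmn
  · intro n hn
    obtain ⟨m, hm, hmn⟩ := step1 n hn
    exact (csInf_le hbdd2 hm).trans hmn
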